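/- Under the A_{\vec p} and RH_{\vec p} conditions, the contribution of the 'small A_{\vec p} cubes' is summable: let R be a dyadic cube and let A be a family of dyadic subcubes of R that are pairwise disjoint at each scale, such that every Q ∈ A with ℓ(R) = 2^s ℓ(Q) satisfies (|Q|^{-1}∫_Q ω) ∏_i (|Q|^{-1}∫_Q σ_i)^{p/p_i'} ≤ [ω,\vec σ]_{A_{\vec p}} / s^2 with s > k ≥ 1. Then Σ_{Q ∈ A} ω(Q)(∏_i σ_i(Q)/|Q|)^p ≤ C_k [ω,\vec σ]_{A_{\vec p}} [\vec σ]_{RH} ∫_R ∏_i σ_i^{p/p_i} dx, where C_k = Σ_{s>k} s^{-2}. -/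

import Mathlib

open MeasureTheory ENNReal

noncomputable section

/-- An axis-parallel (half-open) cube in `ℝ^d` with lower-left corner `c` and side length `l`. -/
def Cube (d : ℕ) (c : Fin d → ℝ) (l : ℝ) : Set (Fin d → ℝ) :=
  {x | ∀ i, c i ≤ x i ∧ x i < c i + l}

lemma cube_eq_pi (d : ℕ) (c : Fin d → ℝ) (l : ℝ) :
    Cube d c l = Set.pi Set.univ fun i => Set.Ico (c i) (c i + l) := by
  ext x; simp [Cube, Set.mem_pi, Set.mem_Ico]

lemma cube_measurable (d : ℕ) (c : Fin d → ℝ) (l : ℝ) : MeasurableSet (Cube d c l) := by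
  rw [cube_eq_pi]; exact MeasurableSet.univ_pi fun i => measurableSet_Ico

lemma cube_volume (d : ℕ) (c : Fin d → ℝ) (l : ℝ) :
    volume (Cube d c l) = ENNReal.ofReal l ^ d := by
  rw [cube_eq_pi, volume_pi_pi]
  simp [Real.volume_Ico]

lemma cube_volume_ne_zero (d : ℕ) (c : Fin d → ℝ) {l : ℝ} (hl : 0 < l) :
    volume (Cube d c l) ≠ 0 := by
  rw [cube_volume]
  exact pow_ne_zero _ (by simpa using hl)

lemma cube_volume_ne_top (d : ℕ) (c : Fin d → ℝ) (l : ℝ) :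
    volume (Cube d c l) ≠ ⊤ := by
  rw [cube_volume]
  exact pow_ne_top ofReal_ne_top

lemma rpow_sum_aux {ι : Type*} {x : ℝ≥0∞} (hx0 : x ≠ 0) (hxt : x ≠ ⊤) (s : Finset ι)
    (e : ι → ℝ) : x ^ (∑ i ∈ s, e i) = ∏ i ∈ s, x ^ e i := by
  classical
  induction s using Finset.induction with
  | empty => simp
  | insert _ _ h ih =>
    rw [Finset.sum_insert h, Finset.prod_insert h, ENNReal.rpow_add _ _ hx0 hxt, ih]

lemma key_ineq {m : ℕ} (w V : ℝ≥0∞) (hV0 : V ≠ 0) (hVt : V ≠ ⊤) (a : Fin m → ℝ≥0∞)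
    (P : ℝ) (e f : Fin m → ℝ) (hef : ∀ i, f i + e i = P) (he : ∀ i, 0 < e i)
    (hf : ∀ i, 0 < f i) (hsum : ∑ i, e i = 1) (hP : 0 < P) :
    w * (∏ i, a i / V) ^ P ≤ (w / V * ∏ i, (a i / V) ^ f i) * ∏ i, a i ^ e i := by
  classical
  by_cases hz : ∃ i, a i = 0
  · obtain ⟨i0, hi0⟩ := hz
    have : (∏ i, a i / V) = 0 :=
      Finset.prod_eq_zero (Finset.mem_univ i0) (by simp [hi0])
    rw [this, ENNReal.zero_rpow_of_pos hP, mul_zero]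
    exact zero_le
  push_neg at hz
  by_cases hw : w = 0
  · simp [hw]
  by_cases ht : ∃ i, a i = ⊤
  · obtain ⟨i0, hi0⟩ := ht
    have hrhs : (w / V * ∏ i, (a i / V) ^ f i) * ∏ i, a i ^ e i = ⊤ := by
      have h2 : (∏ i, a i ^ e i) = ⊤ := by
        rw [← Finset.mul_prod_erase _ _ (Finset.mem_univ i0), hi0,
          ENNReal.top_rpow_of_pos (he i0)]
        rw [ENNReal.top_mul]
        intro hc
        obtain ⟨j, -, hj⟩ := Finset.prod_eq_zero_iff.mp hc
        rcases ENNReal.rpow_eq_zero_iff.mp hj with ⟨h, _⟩ | ⟨h, hlt⟩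
        · exact hz j h
        · exact absurd hlt (not_lt.mpr (he j).le)
      rw [h2, ENNReal.mul_top]
      intro hc
      rcases mul_eq_zero.mp hc with h | h
      · exact hw (by simpa [ENNReal.div_eq_zero_iff, hVt] using h)
      · obtain ⟨j, -, hj⟩ := Finset.prod_eq_zero_iff.mp h
        rcases ENNReal.rpow_eq_zero_iff.mp hj with ⟨h', _⟩ | ⟨h', hlt⟩
        · exact hz j (ENNReal.div_eq_zero_iff.mp h' |>.resolve_right hVt)
        · exact absurd hlt (not_lt.mpr (hf j).le)
    rw [hrhs]; exact le_top
  push_neg at ht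
  -- all a i nonzero and finite: exact identity
  have hdiv0 : ∀ i, a i / V ≠ 0 := fun i => by
    simp [ENNReal.div_eq_zero_iff, hz i, hVt]
  have hdivt : ∀ i, a i / V ≠ ⊤ := fun i => by
    simp [ENNReal.div_eq_top, ht i, hV0]
  have hmain : (∏ i, a i / V) ^ P
      = (V⁻¹ * ∏ i, (a i / V) ^ f i) * ∏ i, a i ^ e i := by
    rw [← ENNReal.prod_rpow_of_nonneg hP.le]
    have : ∀ i ∈ Finset.univ, (a i / V) ^ P = (a i / V) ^ f i * (a i ^ e i * V⁻¹ ^ e i) := by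
      intro i _
      rw [← hef i, ENNReal.rpow_add _ _ (hdiv0 i) (hdivt i)]
      congr 1
      rw [div_eq_mul_inv, ENNReal.mul_rpow_of_nonneg _ _ (he i).le]
    rw [Finset.prod_congr rfl this, Finset.prod_mul_distrib, Finset.prod_mul_distrib,
      ← rpow_sum_aux (ENNReal.inv_ne_zero.mpr hVt) (ENNReal.inv_ne_top.mpr hV0), hsum,
      ENNReal.rpow_one]
    ring
  rw [hmain, ENNReal.div_eq_inv_mul]
  ring_nf
  exact le_refl _

/-- Summing the contribution of the "small `A_{p⃗}` cubes": if `A` is a family of subcubes of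
`R`, indexed by scales `s > k` (cubes of scale `s` having side length `2^{-s} ℓ(R)` and being
pairwise disjoint), on which the local `A_{p⃗}` expression is at most `Ap / s²`, then under the
reverse Hölder condition the total contribution is at most
`(∑_{s>k} s^{-2}) · Ap · RH · ∫_R ∏ᵢ σᵢ^{p/pᵢ}`. -/
theorem small_Ap_cubes_sum (d m k : ℕ) (hm : 0 < m) (hk : 1 ≤ k)
    (p : ℝ) (pp : Fin m → ℝ) (hpp : ∀ i, 1 < pp i)
    (hp : 1 / p = ∑ i, 1 / pp i)
    (ω : (Fin d → ℝ) → ℝ≥0∞) (σ : Fin m → (Fin d → ℝ) → ℝ≥0∞)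
    (hω : Measurable ω) (hσ : ∀ i, Measurable (σ i))
    (Ap RH : ℝ≥0∞)
    (hRH : ∀ (c : Fin d → ℝ) (l : ℝ),
      ∏ i, (∫⁻ x in Cube d c l, σ i x) ^ (p / pp i)
        ≤ RH * ∫⁻ x in Cube d c l, ∏ i, (σ i x) ^ (p / pp i))
    (cR : Fin d → ℝ) (L : ℝ) (hL : 0 < L)
    (cA : ℕ → ℕ → Fin d → ℝ) (sel : ℕ → ℕ → Prop)
    (hsub : ∀ s j, k < s → sel s j → Cube d (cA s j) (L / 2 ^ s) ⊆ Cube d cR L)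
    (hdisj : ∀ s j j', k < s → sel s j → sel s j' → j ≠ j' →
      Disjoint (Cube d (cA s j) (L / 2 ^ s)) (Cube d (cA s j') (L / 2 ^ s)))
    (hsmall : ∀ s j, k < s → sel s j →
      ((∫⁻ x in Cube d (cA s j) (L / 2 ^ s), ω x) / volume (Cube d (cA s j) (L / 2 ^ s)))
          * ∏ i, ((∫⁻ x in Cube d (cA s j) (L / 2 ^ s), σ i x)
              / volume (Cube d (cA s j) (L / 2 ^ s))) ^ (p * (pp i - 1) / pp i)
        ≤ Ap / ((s : ℝ≥0∞)) ^ 2) :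
    ∑' q : {q : ℕ × ℕ // k < q.1 ∧ sel q.1 q.2},
        (∫⁻ x in Cube d (cA q.1.1 q.1.2) (L / 2 ^ q.1.1), ω x)
          * (∏ i, (∫⁻ x in Cube d (cA q.1.1 q.1.2) (L / 2 ^ q.1.1), σ i x)
              / volume (Cube d (cA q.1.1 q.1.2) (L / 2 ^ q.1.1))) ^ p
      ≤ (∑' s : {s : ℕ // k < s}, ((s.1 : ℝ≥0∞)) ^ (-2 : ℝ))
          * Ap * RH * ∫⁻ x in Cube d cR L, ∏ i, (σ i x) ^ (p / pp i) := by
  classical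
  have hpi0 : ∀ i, 0 < pp i := fun i => lt_trans one_pos (hpp i)
  have hp_pos : 0 < p := by
    have h1 : 0 < ∑ i, 1 / pp i := by
      apply Finset.sum_pos (fun i _ => one_div_pos.mpr (hpi0 i))
      simpa [Finset.univ_nonempty_iff] using Fin.pos_iff_nonempty.mp hm
    rw [← hp] at h1; exact one_div_pos.mp h1
  have he : ∀ i, 0 < p / pp i := fun i => div_pos hp_pos (hpi0 i)
  have hf : ∀ i, 0 < p * (pp i - 1) / pp i := fun i =>
    div_pos (mul_pos hp_pos (by linarith [hpp i])) (hpi0 i)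
  have hef : ∀ i, p * (pp i - 1) / pp i + p / pp i = p := fun i => by
    have h := (hpi0 i).ne'
    field_simp
    ring
  have hsum : ∑ i, p / pp i = 1 := by
    have h1 : ∑ i, p / pp i = p * ∑ i, 1 / pp i := by
      rw [Finset.mul_sum]; exact Finset.sum_congr rfl fun i _ => by ring
    rw [h1, ← hp]; field_simp
  have hG : Measurable fun x => ∏ i, (σ i x) ^ (p / pp i) :=
    Finset.measurable_prod _ fun i _ => (hσ i).pow_const _
  set I0 : ℝ≥0∞ := ∫⁻ x in Cube d cR L, ∏ i, (σ i x) ^ (p / pp i) with hI0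
  set S : Set (ℕ × ℕ) := {q | k < q.1 ∧ sel q.1 q.2} with hS
  set B : ℕ × ℕ → ℝ≥0∞ := fun q => Ap / ((q.1 : ℝ≥0∞)) ^ 2
    * (RH * ∫⁻ x in Cube d (cA q.1 q.2) (L / 2 ^ q.1), ∏ i, (σ i x) ^ (p / pp i)) with hB
  have hterm : ∀ s j, k < s → sel s j →
      (∫⁻ x in Cube d (cA s j) (L / 2 ^ s), ω x)
          * (∏ i, (∫⁻ x in Cube d (cA s j) (L / 2 ^ s), σ i x)
              / volume (Cube d (cA s j) (L / 2 ^ s))) ^ p ≤ B (s, j) := by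
    intro s j hks hsel
    have hl : 0 < L / 2 ^ s := by positivity
    have hV0 := cube_volume_ne_zero d (cA s j) hl
    have hVt := cube_volume_ne_top d (cA s j) (L / 2 ^ s)
    calc (∫⁻ x in Cube d (cA s j) (L / 2 ^ s), ω x)
          * (∏ i, (∫⁻ x in Cube d (cA s j) (L / 2 ^ s), σ i x)
              / volume (Cube d (cA s j) (L / 2 ^ s))) ^ p
        ≤ ((∫⁻ x in Cube d (cA s j) (L / 2 ^ s), ω x) / volume (Cube d (cA s j) (L / 2 ^ s))
            * ∏ i, ((∫⁻ x in Cube d (cA s j) (L / 2 ^ s), σ i x)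
                / volume (Cube d (cA s j) (L / 2 ^ s))) ^ (p * (pp i - 1) / pp i))
            * ∏ i, (∫⁻ x in Cube d (cA s j) (L / 2 ^ s), σ i x) ^ (p / pp i) :=
          key_ineq _ _ hV0 hVt _ p (fun i => p / pp i) (fun i => p * (pp i - 1) / pp i)
            hef he hf hsum hp_pos
      _ ≤ (Ap / ((s : ℝ≥0∞)) ^ 2)
            * (RH * ∫⁻ x in Cube d (cA s j) (L / 2 ^ s), ∏ i, (σ i x) ^ (p / pp i)) :=
          mul_le_mul' (hsmall s j hks hsel) (hRH (cA s j) (L / 2 ^ s))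
  have hC : ∀ s : ℕ, k < s →
      ∑' j : ℕ, S.indicator B (s, j) ≤ ((s : ℝ≥0∞)) ^ (-2 : ℝ) * (Ap * RH * I0) := by
    intro s hks
    set T : ℕ → Set (Fin d → ℝ) := fun j =>
      if sel s j then Cube d (cA s j) (L / 2 ^ s) else ∅ with hT
    have hTm : ∀ j, MeasurableSet (T j) := fun j => by
      by_cases h : sel s j <;> simp [hT, h, cube_measurable]
    have hTd : Pairwise (Function.onFun Disjoint T) := by
      intro j j' hne
      unfold Function.onFun
      by_cases h1 : sel s j
      · by_cases h2 : sel s j'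
        · simpa [hT, h1, h2] using hdisj s j j' hks h1 h2 hne
        · simp [hT, h2]
      · simp [hT, h1]
    have hsub' : (⋃ j, T j) ⊆ Cube d cR L := Set.iUnion_subset fun j => by
      by_cases h : sel s j
      · simpa [hT, h] using hsub s j hks h
      · simp [hT, h]
    have step1 : ∀ j, S.indicator B (s, j)
        = Ap / ((s : ℝ≥0∞)) ^ 2 * RH * ∫⁻ x in T j, ∏ i, (σ i x) ^ (p / pp i) := by
      intro j
      by_cases h : sel s j
      · rw [Set.indicator_of_mem (show (s, j) ∈ S from ⟨hks, h⟩)]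
        simp only [hB, hT, if_pos h]
        ring
      · rw [Set.indicator_of_notMem (by simp [hS, h])]
        simp [hT, h]
    calc ∑' j : ℕ, S.indicator B (s, j)
        = ∑' j : ℕ, Ap / ((s : ℝ≥0∞)) ^ 2 * RH * ∫⁻ x in T j, ∏ i, (σ i x) ^ (p / pp i) := by
          simp_rw [step1]
      _ = Ap / ((s : ℝ≥0∞)) ^ 2 * RH
            * ∑' j : ℕ, ∫⁻ x in T j, ∏ i, (σ i x) ^ (p / pp i) := ENNReal.tsum_mul_left
      _ = Ap / ((s : ℝ≥0∞)) ^ 2 * RH * ∫⁻ x in ⋃ j, T j, ∏ i, (σ i x) ^ (p / pp i) := by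
          rw [lintegral_iUnion hTm hTd]
      _ ≤ Ap / ((s : ℝ≥0∞)) ^ 2 * RH * I0 := by
          gcongr
          exact lintegral_mono_set hsub'
      _ = ((s : ℝ≥0∞)) ^ (-2 : ℝ) * (Ap * RH * I0) := by
          rw [ENNReal.rpow_neg, ENNReal.rpow_two, div_eq_mul_inv]
          ring
  calc ∑' q : {q : ℕ × ℕ // k < q.1 ∧ sel q.1 q.2},
        (∫⁻ x in Cube d (cA q.1.1 q.1.2) (L / 2 ^ q.1.1), ω x)
          * (∏ i, (∫⁻ x in Cube d (cA q.1.1 q.1.2) (L / 2 ^ q.1.1), σ i x)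
              / volume (Cube d (cA q.1.1 q.1.2) (L / 2 ^ q.1.1))) ^ p
      ≤ ∑' q : {q : ℕ × ℕ // k < q.1 ∧ sel q.1 q.2}, B q.1 :=
        ENNReal.tsum_le_tsum fun q => hterm q.1.1 q.1.2 q.2.1 q.2.2
    _ = ∑' q : ℕ × ℕ, S.indicator B q := by exact tsum_subtype S B
    _ = ∑' (s : ℕ) (j : ℕ), S.indicator B (s, j) := by exact ENNReal.tsum_prod'
    _ ≤ ∑' s : ℕ, Set.indicator {s : ℕ | k < s}
          (fun s => ((s : ℝ≥0∞)) ^ (-2 : ℝ) * (Ap * RH * I0)) s := by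
        apply ENNReal.tsum_le_tsum
        intro s
        by_cases h : k < s
        · rw [Set.indicator_of_mem (show s ∈ {s : ℕ | k < s} from h)]; exact hC s h
        · rw [Set.indicator_of_notMem (show s ∉ {s : ℕ | k < s} from h)]
          have hz : ∀ j, S.indicator B (s, j) = 0 := fun j =>
            Set.indicator_of_notMem (by simp [hS, h]) _
          simp [hz]
    _ = ∑' s : {s : ℕ // k < s}, ((s.1 : ℝ≥0∞)) ^ (-2 : ℝ) * (Ap * RH * I0) :=
        (tsum_subtype {s : ℕ | k < s} _).symm
    _ = (∑' s : {s : ℕ // k < s}, ((s.1 : ℝ≥0∞)) ^ (-2 : ℝ)) * (Ap * RH * I0) :=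
        ENNReal.tsum_mul_right
    _ = (∑' s : {s : ℕ // k < s}, ((s.1 : ℝ≥0∞)) ^ (-2 : ℝ)) * Ap * RH * I0 := by ring
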